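/- Let R_i(b) denote the number of distinct values among the entries T_b(i,0), …, T_b(i,n−1) of row i of T_b. Then E[R_i] ≥ ⌊n/2⌋ (1 − e^{−1}) − 1. -/

import Mathlib

/-- The `n`-cyclic absolute value of `d ∈ ℤ_n`. -/
def cycAbs (n : ℕ) (d : ZMod n) : ℕ := min d.val (-d).val

/-- The entry `T_b(i,j) = |b(j) − b(j+i)|_n` of the matrix `T_b`. -/
def Tb (n : ℕ) (b : ZMod n → ZMod n) (i : ℕ) (j : ZMod n) : ℕ :=
  cycAbs n (b j - b (j + (i : ZMod n)))

/-- `R_i(b)`: the number of distinct values among the entries of row `i` of `T_b`. -/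
def Rrow (n : ℕ) [NeZero n] (b : ZMod n → ZMod n) (i : ℕ) : ℕ :=
  (Finset.univ.image (fun j : ZMod n => Tb n b i j)).card

lemma gcd_mem_zmultiples (n i : ℕ) [NeZero n] :
    ((Nat.gcd n i : ℕ) : ZMod n) ∈ AddSubgroup.zmultiples ((i : ℕ) : ZMod n) := by
  rw [AddSubgroup.mem_zmultiples_iff]
  refine ⟨Nat.gcdB n i, ?_⟩
  have h := Nat.gcd_eq_gcd_ab n i
  have : ((Nat.gcd n i : ℤ) : ZMod n) = ((n * Nat.gcdA n i + i * Nat.gcdB n i : ℤ) : ZMod n) := by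
    rw [← h]
  push_cast at this ⊢
  rw [zsmul_eq_mul]
  simp only [ZMod.natCast_self, zero_mul, zero_add] at this
  rw [this]; ring

lemma exists_rep (n i : ℕ) [NeZero n] (j : ZMod n) :
    ∃ k : ℕ, j = ((j.val % Nat.gcd n i : ℕ) : ZMod n) + k • ((i : ℕ) : ZMod n) := by
  set g := Nat.gcd n i with hg
  have hmem : j - ((j.val % g : ℕ) : ZMod n) ∈ AddSubgroup.zmultiples ((i : ℕ) : ZMod n) := by
    have hj : j = ((j.val % g + g * (j.val / g) : ℕ) : ZMod n) := by
      rw [Nat.mod_add_div]; simp [ZMod.natCast_val]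
    have h2 : j - ((j.val % g : ℕ) : ZMod n) = (j.val / g : ℕ) • ((g : ℕ) : ZMod n) := by
      nth_rewrite 1 [hj]
      push_cast
      rw [nsmul_eq_mul]; ring
    rw [h2]
    exact AddSubgroup.nsmul_mem _ (gcd_mem_zmultiples n i) _
  rw [← IsOfFinAddOrder.mem_multiples_iff_mem_zmultiples
    (by exact isOfFinAddOrder_of_finite _)] at hmem
  obtain ⟨k, hk⟩ := (AddSubmonoid.mem_multiples_iff _ _).mp hmem
  exact ⟨k, by rw [hk]; ring⟩

/-- The "difference revealing" map: on cycle representatives it keeps the value of `b`,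
elsewhere it records the difference along the cycle of `j ↦ j + i`. -/
def Phi (n i : ℕ) [NeZero n] (b : ZMod n → ZMod n) (j : ZMod n) : ZMod n :=
  if j.val < Nat.gcd n i then b j else b (j - (i : ZMod n)) - b j

lemma Phi_injective (n i : ℕ) [NeZero n] : Function.Injective (Phi n i) := by
  intro b b' h
  have key : ∀ k : ℕ, ∀ r : ZMod n, r.val < Nat.gcd n i →
      b (r + k • ((i : ℕ) : ZMod n)) = b' (r + k • ((i : ℕ) : ZMod n)) := by
    intro k
    induction k with
    | zero =>
      intro r hr
      have := congrFun h r
      simpa [Phi, if_pos hr] using this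
    | succ k ih =>
      intro r hr
      set x := r + (k + 1) • ((i : ℕ) : ZMod n) with hxdef
      have hcf := congrFun h x
      by_cases hx : x.val < Nat.gcd n i
      · simpa [Phi, if_pos hx] using hcf
      · have hxi : x - ((i : ℕ) : ZMod n) = r + k • ((i : ℕ) : ZMod n) := by
          rw [hxdef, succ_nsmul]; ring
        have hprev := ih r hr
        rw [← hxi] at hprev
        simp only [Phi, if_neg hx] at hcf
        rw [hprev] at hcf
        exact sub_right_injective hcf
  funext j
  obtain ⟨k, hk⟩ := exists_rep n i j
  have hg0 : 0 < Nat.gcd n i := Nat.gcd_pos_of_pos_left i (Nat.pos_of_ne_zero (NeZero.ne n))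
  have hgn : Nat.gcd n i ≤ n :=
    Nat.le_of_dvd (Nat.pos_of_ne_zero (NeZero.ne n)) (Nat.gcd_dvd_left n i)
  have hrval : (((j.val % Nat.gcd n i : ℕ) : ZMod n)).val = j.val % Nat.gcd n i := by
    apply ZMod.val_cast_of_lt
    exact lt_of_lt_of_le (Nat.mod_lt _ hg0) hgn
  have hr : (((j.val % Nat.gcd n i : ℕ) : ZMod n)).val < Nat.gcd n i := by
    rw [hrval]; exact Nat.mod_lt _ hg0
  rw [hk]
  exact key k _ hr

lemma cycAbs_cast (n v : ℕ) [NeZero n] (hv1 : 1 ≤ v) (hv2 : 2 * v < n) :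
    cycAbs n ((v : ℕ) : ZMod n) = v := by
  have hvn : v < n := by omega
  have h1 : ((v : ℕ) : ZMod n).val = v := ZMod.val_cast_of_lt hvn
  have h0 : ((v : ℕ) : ZMod n) ≠ 0 := by
    intro h; rw [h, ZMod.val_zero] at h1; omega
  have h2 : (-((v : ℕ) : ZMod n)).val = n - v := by
    rw [ZMod.neg_val, if_neg h0, h1]
  unfold cycAbs
  rw [h1, h2]
  omega

lemma cycAbs_neg (n : ℕ) (d : ZMod n) : cycAbs n (-d) = cycAbs n d := by
  unfold cycAbs; rw [neg_neg, min_comm]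

/-- The target set of the injection: functions avoiding `±v` off the representatives. -/
noncomputable def Bset (n i v : ℕ) [NeZero n] : Finset (ZMod n → ZMod n) :=
  Fintype.piFinset (fun j : ZMod n =>
    if j.val < Nat.gcd n i then Finset.univ else ({((v : ℕ) : ZMod n), -((v : ℕ) : ZMod n)}ᶜ))

lemma Phi_mem_Bset (n i v : ℕ) [NeZero n] (hv1 : 1 ≤ v) (hv2 : 2 * v < n)
    (b : ZMod n → ZMod n) (hb : ∀ j, Tb n b i j ≠ v) :
    Phi n i b ∈ Bset n i v := by
  unfold Bset
  rw [Fintype.mem_piFinset]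
  intro j
  by_cases hj : j.val < Nat.gcd n i
  · simp [hj]
  · simp only [if_neg hj, Finset.mem_compl, Finset.mem_insert, Finset.mem_singleton]
    have hT := hb (j - ((i : ℕ) : ZMod n))
    have hTb : Tb n b i (j - ((i : ℕ) : ZMod n)) = cycAbs n (Phi n i b j) := by
      unfold Tb Phi
      rw [if_neg hj, sub_add_cancel]
    rw [hTb] at hT
    push_neg
    constructor
    · intro h; rw [Phi, if_neg hj] at h
      rw [Phi, if_neg hj, h, cycAbs_cast n v hv1 hv2] at hT; exact hT rfl
    · intro h; rw [Phi, if_neg hj] at h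
      rw [Phi, if_neg hj, h, cycAbs_neg, cycAbs_cast n v hv1 hv2] at hT; exact hT rfl

lemma card_filter_val_lt (n g : ℕ) [NeZero n] (hg : g ≤ n) :
    (Finset.univ.filter fun j : ZMod n => j.val < g).card = g := by
  have h := Finset.card_bij (s := Finset.univ.filter fun j : ZMod n => j.val < g)
    (t := Finset.range g) (fun j _ => j.val) ?_ ?_ ?_
  · rw [h, Finset.card_range]
  · intro a ha; simp only [Finset.mem_filter] at ha; simpa using ha.2
  · intro a _ b _ hab; exact ZMod.val_injective n hab
  · intro m hm
    simp only [Finset.mem_range] at hm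
    refine ⟨(m : ZMod n), ?_, ?_⟩
    · simp only [Finset.mem_filter, Finset.mem_univ, true_and]
      rw [ZMod.val_cast_of_lt (by omega)]; exact hm
    · show ((m : ℕ) : ZMod n).val = m
      exact ZMod.val_cast_of_lt (by omega)

lemma card_Bset (n i v : ℕ) [NeZero n] (hv1 : 1 ≤ v) (hv2 : 2 * v < n) :
    (Bset n i v).card = n ^ (Nat.gcd n i) * (n - 2) ^ (n - Nat.gcd n i) := by
  have hg : Nat.gcd n i ≤ n :=
    Nat.le_of_dvd (Nat.pos_of_ne_zero (NeZero.ne n)) (Nat.gcd_dvd_left n i)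
  have hpair : ({((v : ℕ) : ZMod n), -((v : ℕ) : ZMod n)} : Finset (ZMod n)).card = 2 := by
    rw [Finset.card_insert_of_notMem, Finset.card_singleton]
    simp only [Finset.mem_singleton]
    intro h
    have h1 : ((v : ℕ) : ZMod n).val = v := ZMod.val_cast_of_lt (by omega)
    have h0 : ((v : ℕ) : ZMod n) ≠ 0 := by
      intro h'; rw [h', ZMod.val_zero] at h1; omega
    have h2 : (-((v : ℕ) : ZMod n)).val = n - v := by rw [ZMod.neg_val, if_neg h0, h1]
    rw [h] at h1; omega
  rw [Bset, Fintype.card_piFinset]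
  have : ∀ j : ZMod n,
      (if j.val < Nat.gcd n i then (Finset.univ : Finset (ZMod n))
        else ({((v : ℕ) : ZMod n), -((v : ℕ) : ZMod n)}ᶜ)).card
      = if j.val < Nat.gcd n i then n else n - 2 := by
    intro j
    by_cases hj : j.val < Nat.gcd n i
    · simp [hj, Finset.card_univ, ZMod.card]
    · simp only [if_neg hj, Finset.card_compl, hpair, Fintype.card_eq_nat_card]
      rw [Nat.card_zmod]
  rw [Finset.prod_congr rfl (fun j _ => this j), Finset.prod_ite, Finset.prod_const,
    Finset.prod_const, card_filter_val_lt n _ hg]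
  have hnot : (Finset.univ.filter fun j : ZMod n => ¬ j.val < Nat.gcd n i).card
      = n - Nat.gcd n i := by
    rw [Finset.filter_not, Finset.card_sdiff_of_subset (Finset.filter_subset _ _), Finset.card_univ,
      ZMod.card, card_filter_val_lt n _ hg]
  rw [hnot]

lemma real_bound (n g : ℕ) (h2 : 2 ≤ n) (hg2 : 2 * g ≤ n) :
    ((n : ℝ)) ^ g * ((n : ℝ) - 2) ^ (n - g) ≤ (n : ℝ) ^ n * Real.exp (-1) := by
  have hgn : g ≤ n := by omega
  have npos : (0 : ℝ) < n := by positivity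
  have hn2 : (2 : ℝ) ≤ n := by exact_mod_cast h2
  have hcast : ((n - g : ℕ) : ℝ) = (n : ℝ) - g := by rw [Nat.cast_sub hgn]
  have h1 : (0 : ℝ) ≤ 1 - 2 / n := by
    rw [sub_nonneg, div_le_one npos]; linarith
  have hexp : 1 - 2 / (n : ℝ) ≤ Real.exp (-(2 / n)) := by
    have := Real.add_one_le_exp (-(2 / (n : ℝ))); linarith
  have hstep : (1 - 2 / (n : ℝ)) ^ (n - g) ≤ Real.exp (-1) := by
    calc (1 - 2 / (n : ℝ)) ^ (n - g) ≤ (Real.exp (-(2 / n))) ^ (n - g) :=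
          pow_le_pow_left₀ h1 hexp _
      _ = Real.exp (((n - g : ℕ) : ℝ) * (-(2 / n))) := by rw [← Real.exp_nat_mul]
      _ ≤ Real.exp (-1) := by
          apply Real.exp_le_exp.mpr
          rw [hcast, mul_neg, neg_le_neg_iff]
          have hng : (n : ℝ) ≤ 2 * ((n : ℝ) - g) := by
            have : (2 * g : ℝ) ≤ n := by exact_mod_cast hg2
            linarith
          have heq : ((n : ℝ) - g) * (2 / n) = 2 * ((n : ℝ) - g) / n := by ring
          rw [heq, le_div_iff₀ npos, one_mul]
          exact hng
  have key : ((n : ℝ) - 2) ^ (n - g) ≤ (n : ℝ) ^ (n - g) * Real.exp (-1) := by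
    have hfrac : (n : ℝ) - 2 = n * (1 - 2 / n) := by field_simp
    rw [hfrac, mul_pow]
    exact mul_le_mul_of_nonneg_left hstep (by positivity)
  calc (n : ℝ) ^ g * ((n : ℝ) - 2) ^ (n - g)
      ≤ (n : ℝ) ^ g * ((n : ℝ) ^ (n - g) * Real.exp (-1)) :=
        mul_le_mul_of_nonneg_left key (by positivity)
    _ = (n : ℝ) ^ n * Real.exp (-1) := by
        rw [← mul_assoc, ← pow_add]
        congr 2
        omega

lemma count_avoid (n i v : ℕ) [NeZero n] (hi1 : 1 ≤ i) (hi2 : i ≤ n / 2)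
    (hv1 : 1 ≤ v) (hv2 : 2 * v < n) :
    ((Finset.univ.filter fun b : ZMod n → ZMod n => ∀ j, Tb n b i j ≠ v).card : ℝ)
      ≤ (n : ℝ) ^ n * Real.exp (-1) := by
  have hn2 : 2 ≤ n := by omega
  have hgi : Nat.gcd n i ≤ i := Nat.le_of_dvd hi1 (Nat.gcd_dvd_right n i)
  have hg2 : 2 * Nat.gcd n i ≤ n := by
    have : 2 * (n / 2) ≤ n := Nat.mul_div_le n 2
    omega
  have hcard : (Finset.univ.filter fun b : ZMod n → ZMod n => ∀ j, Tb n b i j ≠ v).card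
      ≤ (Bset n i v).card := by
    apply Finset.card_le_card_of_injOn (Phi n i)
    · intro b hb
      simp only [Finset.mem_coe, Finset.mem_filter] at hb
      exact Phi_mem_Bset n i v hv1 hv2 b hb.2
    · exact (Phi_injective n i).injOn
  calc ((Finset.univ.filter fun b : ZMod n → ZMod n => ∀ j, Tb n b i j ≠ v).card : ℝ)
      ≤ ((Bset n i v).card : ℝ) := by exact_mod_cast hcard
    _ = (n : ℝ) ^ (Nat.gcd n i) * ((n : ℝ) - 2) ^ (n - Nat.gcd n i) := by
        rw [card_Bset n i v hv1 hv2]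
        push_cast [Nat.cast_sub hn2]
        ring
    _ ≤ (n : ℝ) ^ n * Real.exp (-1) := real_bound n (Nat.gcd n i) hn2 hg2

/-- For `b` uniform on `ℳ_n` and `1 ≤ i ≤ ⌊n/2⌋`,
`E[R_i] ≥ ⌊n/2⌋ (1 − e^{−1}) − 1`. -/
theorem expectation_Rrow_lower_bound (n : ℕ) [NeZero n] (i : ℕ)
    (hi1 : 1 ≤ i) (hi2 : i ≤ n / 2) :
    (∑ b : ZMod n → ZMod n, (Rrow n b i : ℝ)) / (n : ℝ) ^ n
      ≥ ((n / 2 : ℕ) : ℝ) * (1 - Real.exp (-1)) - 1 := by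
  have hn2 : 2 ≤ n := by omega
  have hm1 : 1 ≤ n / 2 := le_trans hi1 hi2
  set m := n / 2 with hm
  set V : Finset ℕ := Finset.Icc 1 (m - 1) with hV
  have hcardfun : Fintype.card (ZMod n → ZMod n) = n ^ n := by
    rw [Fintype.card_fun, ZMod.card]
  -- pointwise bound for each b
  have hb : ∀ b : ZMod n → ZMod n,
      ∑ v ∈ V, (if ∃ j, Tb n b i j = v then (1 : ℝ) else 0) ≤ (Rrow n b i : ℝ) := by
    intro b
    rw [Finset.sum_boole]
    have hsub : (V.filter fun v => ∃ j, Tb n b i j = v)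
        ⊆ (Finset.univ.image fun j : ZMod n => Tb n b i j) := by
      intro v hv
      simp only [Finset.mem_filter] at hv
      obtain ⟨j, hj⟩ := hv.2
      exact Finset.mem_image.mpr ⟨j, Finset.mem_univ j, hj⟩
    unfold Rrow
    exact_mod_cast Nat.cast_le.mpr (Finset.card_le_card hsub)
  -- per-value bound
  have hv : ∀ v ∈ V, (n : ℝ) ^ n * (1 - Real.exp (-1))
      ≤ ∑ b : ZMod n → ZMod n, (if ∃ j, Tb n b i j = v then (1 : ℝ) else 0) := by
    intro v hvV
    rw [hV, Finset.mem_Icc] at hvV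
    have hv1 : 1 ≤ v := hvV.1
    have hv2 : 2 * v < n := by
      have h1 : v ≤ m - 1 := hvV.2
      have h2 : 2 * m ≤ n := Nat.mul_div_le n 2
      omega
    rw [Finset.sum_boole]
    have hsplit : (Finset.univ.filter fun b : ZMod n → ZMod n => ∃ j, Tb n b i j = v).card
        + (Finset.univ.filter fun b : ZMod n → ZMod n => ∀ j, Tb n b i j ≠ v).card
        = n ^ n := by
      rw [← hcardfun, ← Finset.card_univ]
      have := Finset.card_filter_add_card_filter_not
        (s := (Finset.univ : Finset (ZMod n → ZMod n)))
        (p := fun b => ∃ j, Tb n b i j = v)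
      rw [← this]
      have hfe : (Finset.univ.filter fun b : ZMod n → ZMod n => ∀ j, Tb n b i j ≠ v)
          = (Finset.univ.filter fun b : ZMod n → ZMod n => ¬∃ j, Tb n b i j = v) := by
        apply Finset.filter_congr
        intro b _
        simp [not_exists]
      rw [hfe]
    have havoid := count_avoid n i v hi1 hi2 hv1 hv2
    have hcast : ((Finset.univ.filter fun b : ZMod n → ZMod n => ∃ j, Tb n b i j = v).card : ℝ)
        = (n : ℝ) ^ n
          - ((Finset.univ.filter fun b : ZMod n → ZMod n => ∀ j, Tb n b i j ≠ v).card : ℝ) := by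
      have h' : (((Finset.univ.filter fun b : ZMod n → ZMod n => ∃ j, Tb n b i j = v).card : ℝ)
          + ((Finset.univ.filter fun b : ZMod n → ZMod n => ∀ j, Tb n b i j ≠ v).card : ℝ))
          = ((n : ℝ)) ^ n := by exact_mod_cast hsplit
      linarith
    rw [hcast]
    linarith
  -- combine
  have hVcard : (V.card : ℝ) = (m : ℝ) - 1 := by
    rw [hV, Nat.card_Icc]
    have : m - 1 + 1 - 1 = m - 1 := by omega
    rw [this, Nat.cast_sub hm1, Nat.cast_one]
  have hmain : ((m : ℝ) - 1) * ((n : ℝ) ^ n * (1 - Real.exp (-1)))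
      ≤ ∑ b : ZMod n → ZMod n, (Rrow n b i : ℝ) := by
    calc ((m : ℝ) - 1) * ((n : ℝ) ^ n * (1 - Real.exp (-1)))
        = ∑ _v ∈ V, (n : ℝ) ^ n * (1 - Real.exp (-1)) := by
          rw [Finset.sum_const, nsmul_eq_mul, hVcard]
      _ ≤ ∑ v ∈ V, ∑ b : ZMod n → ZMod n, (if ∃ j, Tb n b i j = v then (1 : ℝ) else 0) :=
          Finset.sum_le_sum hv
      _ = ∑ b : ZMod n → ZMod n, ∑ v ∈ V, (if ∃ j, Tb n b i j = v then (1 : ℝ) else 0) :=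
          Finset.sum_comm
      _ ≤ ∑ b : ZMod n → ZMod n, (Rrow n b i : ℝ) := Finset.sum_le_sum (fun b _ => hb b)
  have hnn : (0 : ℝ) < (n : ℝ) ^ n := by positivity
  rw [ge_iff_le, le_div_iff₀ hnn]
  have hexp : 0 < Real.exp (-1) := Real.exp_pos _
  have hexp1 : Real.exp (-1) < 1 := by
    rw [Real.exp_lt_one_iff]; norm_num
  nlinarith [hmain, hnn]
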